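/- Let R be a commutative ring not isomorphic to Z₂ × D for any domain D. Then γ_t(Γ(R)) = γ(Γ(R)). -/

import Mathlib

/-- Vertices of the zero-divisor graph: nonzero zero-divisors. -/
def zdVerts (R : Type*) [CommRing R] : Set R :=
  {x | x ≠ 0 ∧ ∃ y ≠ 0, x * y = 0}

/-- The set of all zero-divisors (including 0 when R is nontrivial). -/
def zdSet (R : Type*) [CommRing R] : Set R :=
  {x | ∃ y ≠ 0, x * y = 0}

/-- A dominating set of the zero-divisor graph Γ(R) (loops allowed: `x` is
adjacent to itself iff `x^2 = 0`). -/
def IsDomSet (R : Type*) [CommRing R] (X : Set R) : Prop :=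
  X ⊆ zdVerts R ∧ ∀ v ∈ zdVerts R, v ∉ X → ∃ x ∈ X, x * v = 0

/-- A total dominating set of Γ(R): every vertex has a neighbor in `X`
(possibly itself, if looped). -/
def IsTotDomSet (R : Type*) [CommRing R] (X : Set R) : Prop :=
  X ⊆ zdVerts R ∧ ∀ v ∈ zdVerts R, ∃ x ∈ X, x * v = 0

/-- The domination number γ(Γ(R)), as a cardinal. -/
noncomputable def domNum (R : Type*) [CommRing R] : Cardinal :=
  ⨅ X : {X : Set R // IsDomSet R X}, Cardinal.mk X.1

/-- The total domination number γ_t(Γ(R)), as a cardinal. -/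
noncomputable def totDomNum (R : Type*) [CommRing R] : Cardinal :=
  ⨅ X : {X : Set R // IsTotDomSet R X}, Cardinal.mk X.1

/-- The zero-divisor graph as a simple graph (loops discarded), used for girth. -/
def zdGraph (R : Type*) [CommRing R] : SimpleGraph R where
  Adj r s := r ≠ s ∧ r ≠ 0 ∧ s ≠ 0 ∧ r * s = 0
  symm := by constructor; intro r s h; exact ⟨h.1.symm, h.2.2.1, h.2.1, by rw [mul_comm]; exact h.2.2.2⟩
  loopless := by constructor; intro r h; exact h.1 rfl

section Stmt18Aux

attribute [local instance] Classical.propDecidable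

universe u

variable {R : Type u} [CommRing R]

/-- The set of all vertices is a total dominating set. -/
lemma zdVerts_tot : IsTotDomSet R (zdVerts R) := by
  refine ⟨subset_rfl, ?_⟩
  intro v hv
  obtain ⟨hv0, y, hy0, hvy⟩ := hv
  exact ⟨y, ⟨hy0, v, hv0, by rw [mul_comm]; exact hvy⟩, by rw [mul_comm]; exact hvy⟩

lemma dom_of_tot {X : Set R} (h : IsTotDomSet R X) : IsDomSet R X :=
  ⟨h.1, fun v hv _ => h.2 v hv⟩

/-- The generic "swap" lemma: remove `K` from a dominating set `S` and add `F`. -/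
lemma swap_step (S K F : Finset R) (hK : K ⊆ S)
    (hcard : F.card ≤ K.card) (hdom : IsDomSet R ↑S) (hF : ↑F ⊆ zdVerts R)
    (hKdom : ∀ v ∈ K, ∃ t ∈ (S \ K) ∪ F, t * v = 0)
    (hcover : ∀ w ∈ K, ∀ v : R, w * v = 0 → ∃ t ∈ (S \ K) ∪ F, t * v = 0)
    (hnew : ∀ f ∈ F, ∃ t ∈ (S \ K) ∪ F, t * f = 0) :
    IsDomSet R ↑((S \ K) ∪ F) ∧ ((S \ K) ∪ F).card ≤ S.card ∧
      ∀ t ∈ (S \ K) ∪ F, (∀ u ∈ (S \ K) ∪ F, u * t ≠ 0) →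
        t ∈ S ∧ t ∉ K ∧ ∀ u ∈ S, u * t ≠ 0 := by
  refine ⟨⟨?_, ?_⟩, ?_, ?_⟩
  · intro t ht
    rcases Finset.mem_union.1 (Finset.mem_coe.1 ht) with h | h
    · exact hdom.1 (Finset.mem_coe.2 (Finset.mem_sdiff.1 h).1)
    · exact hF (Finset.mem_coe.2 h)
  · intro v hv hvT
    by_cases hvS : v ∈ S
    · by_cases hvK : v ∈ K
      · exact hKdom v hvK
      · exact absurd (Finset.mem_coe.2
          (Finset.mem_union_left _ (Finset.mem_sdiff.2 ⟨hvS, hvK⟩))) hvT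
    · obtain ⟨w, hw, hwv⟩ := hdom.2 v hv (fun hc => hvS (Finset.mem_coe.1 hc))
      have hwS : w ∈ S := Finset.mem_coe.1 hw
      by_cases hwK : w ∈ K
      · exact hcover w hwK v hwv
      · exact ⟨w, Finset.mem_union_left _ (Finset.mem_sdiff.2 ⟨hwS, hwK⟩), hwv⟩
  · have h1 : ((S \ K) ∪ F).card ≤ (S \ K).card + F.card := Finset.card_union_le _ _
    have h2 : (S \ K).card = S.card - K.card := Finset.card_sdiff_of_subset hK
    have h3 : K.card ≤ S.card := Finset.card_le_card hK
    omega
  · intro t ht hlon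
    rcases Finset.mem_union.1 ht with h | h
    · obtain ⟨htS, htK⟩ := Finset.mem_sdiff.1 h
      refine ⟨htS, htK, ?_⟩
      intro u huS hut
      by_cases huK : u ∈ K
      · obtain ⟨t', ht', h0⟩ := hcover u huK t hut
        exact hlon t' ht' h0
      · exact hlon u (Finset.mem_union_left _ (Finset.mem_sdiff.2 ⟨huS, huK⟩)) hut
    · obtain ⟨t', ht', h0⟩ := hnew t h
      exact absurd h0 (hlon t' ht')

/-- One improvement step: given a dominating set with a lonely vertex `x` and at least
two elements, produce a dominating set of no larger size with strictly fewer lonely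
vertices. -/
lemma step (S : Finset R) (hdom : IsDomSet R ↑S)
    {x : R} (hx : x ∈ S) (hlx : ∀ w ∈ S, w * x ≠ 0)
    {z₀ : R} (hz₀ : z₀ ∈ S) (hne : z₀ ≠ x) :
    ∃ T : Finset R, IsDomSet R ↑T ∧ T.card ≤ S.card ∧
      (T.filter fun t => ∀ u ∈ T, u * t ≠ 0).card
        < (S.filter fun s => ∀ u ∈ S, u * s ≠ 0).card := by
  have main : ∀ (K F : Finset R), K ⊆ S → F.card ≤ K.card → ↑F ⊆ zdVerts R →
      (∀ v ∈ K, ∃ t ∈ (S \ K) ∪ F, t * v = 0) →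
      (∀ w ∈ K, ∀ v : R, w * v = 0 → ∃ t ∈ (S \ K) ∪ F, t * v = 0) →
      (∀ f ∈ F, ∃ t ∈ (S \ K) ∪ F, t * f = 0) →
      (x ∈ K ∨ ∃ t ∈ (S \ K) ∪ F, t * x = 0) →
      ∃ T : Finset R, IsDomSet R ↑T ∧ T.card ≤ S.card ∧
        (T.filter fun t => ∀ u ∈ T, u * t ≠ 0).card
          < (S.filter fun s => ∀ u ∈ S, u * s ≠ 0).card := by
    intro K F hKS hFc hFV hKdom hcover hnew hxfix
    obtain ⟨hTdom, hTcard, hTlon⟩ := swap_step S K F hKS hFc hdom hFV hKdom hcover hnew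
    refine ⟨(S \ K) ∪ F, hTdom, hTcard, ?_⟩
    have hsub : ((S \ K) ∪ F).filter (fun t => ∀ u ∈ (S \ K) ∪ F, u * t ≠ 0) ⊆
        (S.filter fun s => ∀ u ∈ S, u * s ≠ 0).erase x := by
      intro t htf
      obtain ⟨htT, hlon⟩ := Finset.mem_filter.1 htf
      obtain ⟨htS, htK, hlonS⟩ := hTlon t htT hlon
      refine Finset.mem_erase.2 ⟨?_, Finset.mem_filter.2 ⟨htS, hlonS⟩⟩
      rcases hxfix with hxK | ⟨t', ht', h0⟩
      · exact fun h => htK (by rw [h]; exact hxK)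
      · exact fun h => hlon t' ht' (by rw [h]; exact h0)
    exact lt_of_le_of_lt (Finset.card_le_card hsub)
      (Finset.card_erase_lt_of_mem (Finset.mem_filter.2 ⟨hx, hlx⟩))
  -- basic data
  have hxV : x ∈ zdVerts R := hdom.1 (Finset.mem_coe.2 hx)
  obtain ⟨hx0, b, hb0, hxb⟩ := hxV
  have hbx : b * x = 0 := by rw [mul_comm]; exact hxb
  have hbV : b ∈ zdVerts R := ⟨hb0, x, hx0, hbx⟩
  have hz₀V : z₀ ∈ zdVerts R := hdom.1 (Finset.mem_coe.2 hz₀)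
  obtain ⟨hz₀0, g, hg0, hz₀g⟩ := hz₀V
  have hgz₀ : g * z₀ = 0 := by rw [mul_comm]; exact hz₀g
  have hgV : g ∈ zdVerts R := ⟨hg0, z₀, hz₀0, hgz₀⟩
  have hd0 : x * z₀ ≠ 0 := fun h => hlx z₀ hz₀ (by rw [mul_comm]; exact h)
  have hdb : (x * z₀) * b = 0 := by linear_combination z₀ * hxb
  have hdV : x * z₀ ∈ zdVerts R := ⟨hd0, b, hb0, hdb⟩
  have hxz : x ≠ z₀ := fun h => hne h.symm
  by_cases hdS : x * z₀ ∈ S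
  · by_cases hdx : x * z₀ = x
    · -- Case A1 : K = {z₀}, F = {g}
      apply main {z₀} {g} (Finset.singleton_subset_iff.2 hz₀) (by simp)
      · intro t ht
        rw [Finset.coe_singleton, Set.mem_singleton_iff] at ht
        rw [ht]; exact hgV
      · intro v hv
        rw [Finset.mem_singleton] at hv; rw [hv]
        exact ⟨g, Finset.mem_union_right _ (Finset.mem_singleton_self g), hgz₀⟩
      · intro w hw v hwv
        rw [Finset.mem_singleton] at hw; rw [hw] at hwv
        refine ⟨x, Finset.mem_union_left _
          (Finset.mem_sdiff.2 ⟨hx, by simpa using hxz⟩), ?_⟩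
        linear_combination x * hwv - v * hdx
      · intro f hf
        rw [Finset.mem_singleton] at hf; rw [hf]
        refine ⟨x, Finset.mem_union_left _
          (Finset.mem_sdiff.2 ⟨hx, by simpa using hxz⟩), ?_⟩
        linear_combination x * hz₀g - g * hdx
      · refine Or.inr ⟨g, Finset.mem_union_right _ (Finset.mem_singleton_self g), ?_⟩
        linear_combination x * hgz₀ - g * hdx
    · by_cases hdz : x * z₀ = z₀
      · -- Case A2 : K = {x}, F = {b}
        apply main {x} {b} (Finset.singleton_subset_iff.2 hx) (by simp)
        · intro t ht
          rw [Finset.coe_singleton, Set.mem_singleton_iff] at ht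
          rw [ht]; exact hbV
        · intro v hv
          rw [Finset.mem_singleton] at hv; rw [hv]
          exact ⟨b, Finset.mem_union_right _ (Finset.mem_singleton_self b), hbx⟩
        · intro w hw v hwv
          rw [Finset.mem_singleton] at hw; rw [hw] at hwv
          refine ⟨z₀, Finset.mem_union_left _
            (Finset.mem_sdiff.2 ⟨hz₀, by simpa using hne⟩), ?_⟩
          linear_combination z₀ * hwv - v * hdz
        · intro f hf
          rw [Finset.mem_singleton] at hf; rw [hf]
          refine ⟨z₀, Finset.mem_union_left _
            (Finset.mem_sdiff.2 ⟨hz₀, by simpa using hne⟩), ?_⟩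
          linear_combination z₀ * hxb - b * hdz
        · exact Or.inl (Finset.mem_singleton_self x)
      · -- Case A3 : K = {x, z₀}, F = {b, g}
        have hdK : (x * z₀) ∉ ({x, z₀} : Finset R) := by
          simp only [Finset.mem_insert, Finset.mem_singleton]
          push_neg; exact ⟨hdx, hdz⟩
        have hdmem : x * z₀ ∈ (S \ ({x, z₀} : Finset R)) ∪ {b, g} :=
          Finset.mem_union_left _ (Finset.mem_sdiff.2 ⟨hdS, hdK⟩)
        apply main {x, z₀} {b, g}
          (Finset.insert_subset_iff.2 ⟨hx, Finset.singleton_subset_iff.2 hz₀⟩)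
          (le_trans (Finset.card_insert_le _ _) (by simp [Finset.card_pair hxz]))
        · intro t ht
          rw [Finset.coe_insert, Finset.coe_singleton] at ht
          rcases ht with rfl | ht
          · exact hbV
          · rw [Set.mem_singleton_iff] at ht; rw [ht]; exact hgV
        · intro v hv
          rcases Finset.mem_insert.1 hv with h | hv
          · rw [h]
            exact ⟨b, Finset.mem_union_right _ (Finset.mem_insert_self b _), hbx⟩
          · rw [Finset.mem_singleton] at hv; rw [hv]
            exact ⟨g, Finset.mem_union_right _ (by simp), hgz₀⟩
        · intro w hw v hwv
          rcases Finset.mem_insert.1 hw with h | hw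
          · rw [h] at hwv
            exact ⟨x * z₀, hdmem, by linear_combination z₀ * hwv⟩
          · rw [Finset.mem_singleton] at hw; rw [hw] at hwv
            exact ⟨x * z₀, hdmem, by linear_combination x * hwv⟩
        · intro f hf
          rcases Finset.mem_insert.1 hf with h | hf
          · rw [h]
            exact ⟨x * z₀, hdmem, hdb⟩
          · rw [Finset.mem_singleton] at hf; rw [hf]
            exact ⟨x * z₀, hdmem, by linear_combination x * hz₀g⟩
        · exact Or.inl (Finset.mem_insert_self x _)
  · obtain ⟨z, hzmem, hzd⟩ := hdom.2 (x * z₀) hdV (fun hc => hdS (Finset.mem_coe.1 hc))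
    have hz : z ∈ S := Finset.mem_coe.1 hzmem
    by_cases hzx : z = x
    · -- Case B1 : K = {x, z₀}, F = {x*z₀, g}
      rw [hzx] at hzd
      have hdmem : x * z₀ ∈ (S \ ({x, z₀} : Finset R)) ∪ {x * z₀, g} :=
        Finset.mem_union_right _ (Finset.mem_insert_self _ _)
      have hgmem : g ∈ (S \ ({x, z₀} : Finset R)) ∪ {x * z₀, g} :=
        Finset.mem_union_right _ (by simp)
      apply main {x, z₀} {x * z₀, g}
        (Finset.insert_subset_iff.2 ⟨hx, Finset.singleton_subset_iff.2 hz₀⟩)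
        (le_trans (Finset.card_insert_le _ _) (by simp [Finset.card_pair hxz]))
      · intro t ht
        rw [Finset.coe_insert, Finset.coe_singleton] at ht
        rcases ht with h | ht
        · rw [h]; exact hdV
        · rw [Set.mem_singleton_iff] at ht; rw [ht]; exact hgV
      · intro v hv
        rcases Finset.mem_insert.1 hv with h | hv
        · rw [h]
          exact ⟨x * z₀, hdmem, by linear_combination hzd⟩
        · rw [Finset.mem_singleton] at hv; rw [hv]
          exact ⟨g, hgmem, hgz₀⟩
      · intro w hw v hwv
        rcases Finset.mem_insert.1 hw with h | hw
        · rw [h] at hwv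
          exact ⟨x * z₀, hdmem, by linear_combination z₀ * hwv⟩
        · rw [Finset.mem_singleton] at hw; rw [hw] at hwv
          exact ⟨x * z₀, hdmem, by linear_combination x * hwv⟩
      · intro f hf
        rcases Finset.mem_insert.1 hf with h | hf
        · rw [h]
          exact ⟨g, hgmem, by linear_combination x * hgz₀⟩
        · rw [Finset.mem_singleton] at hf; rw [hf]
          exact ⟨x * z₀, hdmem, by linear_combination x * hz₀g⟩
      · exact Or.inl (Finset.mem_insert_self x _)
    · by_cases hzz : z = z₀
      · -- Case B2 : K = {x, z₀}, F = {x*z₀, b}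
        rw [hzz] at hzd
        have hdmem : x * z₀ ∈ (S \ ({x, z₀} : Finset R)) ∪ {x * z₀, b} :=
          Finset.mem_union_right _ (Finset.mem_insert_self _ _)
        have hbmem : b ∈ (S \ ({x, z₀} : Finset R)) ∪ {x * z₀, b} :=
          Finset.mem_union_right _ (by simp)
        apply main {x, z₀} {x * z₀, b}
          (Finset.insert_subset_iff.2 ⟨hx, Finset.singleton_subset_iff.2 hz₀⟩)
          (le_trans (Finset.card_insert_le _ _) (by simp [Finset.card_pair hxz]))
        · intro t ht
          rw [Finset.coe_insert, Finset.coe_singleton] at ht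
          rcases ht with h | ht
          · rw [h]; exact hdV
          · rw [Set.mem_singleton_iff] at ht; rw [ht]; exact hbV
        · intro v hv
          rcases Finset.mem_insert.1 hv with h | hv
          · rw [h]
            exact ⟨b, hbmem, hbx⟩
          · rw [Finset.mem_singleton] at hv; rw [hv]
            exact ⟨x * z₀, hdmem, by linear_combination hzd⟩
        · intro w hw v hwv
          rcases Finset.mem_insert.1 hw with h | hw
          · rw [h] at hwv
            exact ⟨x * z₀, hdmem, by linear_combination z₀ * hwv⟩
          · rw [Finset.mem_singleton] at hw; rw [hw] at hwv
            exact ⟨x * z₀, hdmem, by linear_combination x * hwv⟩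
        · intro f hf
          rcases Finset.mem_insert.1 hf with h | hf
          · rw [h]
            exact ⟨b, hbmem, by linear_combination z₀ * hbx⟩
          · rw [Finset.mem_singleton] at hf; rw [hf]
            exact ⟨x * z₀, hdmem, by linear_combination z₀ * hxb⟩
        · exact Or.inl (Finset.mem_insert_self x _)
      · by_cases hzz0 : z * z₀ = 0
        · -- Case B3 : K = {x, z₀}, F = {x*z₀, b}
          have hdmem : x * z₀ ∈ (S \ ({x, z₀} : Finset R)) ∪ {x * z₀, b} :=
            Finset.mem_union_right _ (Finset.mem_insert_self _ _)
          have hbmem : b ∈ (S \ ({x, z₀} : Finset R)) ∪ {x * z₀, b} :=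
            Finset.mem_union_right _ (by simp)
          have hzmem' : z ∈ (S \ ({x, z₀} : Finset R)) ∪ {x * z₀, b} := by
            refine Finset.mem_union_left _ (Finset.mem_sdiff.2 ⟨hz, ?_⟩)
            simp only [Finset.mem_insert, Finset.mem_singleton]
            push_neg; exact ⟨hzx, hzz⟩
          apply main {x, z₀} {x * z₀, b}
            (Finset.insert_subset_iff.2 ⟨hx, Finset.singleton_subset_iff.2 hz₀⟩)
            (le_trans (Finset.card_insert_le _ _) (by simp [Finset.card_pair hxz]))
          · intro t ht
            rw [Finset.coe_insert, Finset.coe_singleton] at ht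
            rcases ht with h | ht
            · rw [h]; exact hdV
            · rw [Set.mem_singleton_iff] at ht; rw [ht]; exact hbV
          · intro v hv
            rcases Finset.mem_insert.1 hv with h | hv
            · rw [h]
              exact ⟨b, hbmem, hbx⟩
            · rw [Finset.mem_singleton] at hv; rw [hv]
              exact ⟨z, hzmem', hzz0⟩
          · intro w hw v hwv
            rcases Finset.mem_insert.1 hw with h | hw
            · rw [h] at hwv
              exact ⟨x * z₀, hdmem, by linear_combination z₀ * hwv⟩
            · rw [Finset.mem_singleton] at hw; rw [hw] at hwv
              exact ⟨x * z₀, hdmem, by linear_combination x * hwv⟩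
          · intro f hf
            rcases Finset.mem_insert.1 hf with h | hf
            · rw [h]
              exact ⟨b, hbmem, by linear_combination z₀ * hbx⟩
            · rw [Finset.mem_singleton] at hf; rw [hf]
              exact ⟨x * z₀, hdmem, by linear_combination z₀ * hxb⟩
          · exact Or.inl (Finset.mem_insert_self x _)
        · -- Case B4 : K = {x, z₀, z}, F = {x*z₀, z*z₀, z*x}
          have hzx0 : z * x ≠ 0 := hlx z hz
          have hKsub : ({x, z₀, z} : Finset R) ⊆ S := by
            refine Finset.insert_subset_iff.2 ⟨hx, Finset.insert_subset_iff.2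
              ⟨hz₀, Finset.singleton_subset_iff.2 hz⟩⟩
          have hKcard : ({x, z₀, z} : Finset R).card = 3 := by
            rw [Finset.card_insert_of_notMem, Finset.card_insert_of_notMem,
              Finset.card_singleton]
            · simpa using fun h => hzz h.symm
            · simp only [Finset.mem_insert, Finset.mem_singleton]
              push_neg
              exact ⟨hxz, fun h => hzx h.symm⟩
          have hdmem : x * z₀ ∈ (S \ ({x, z₀, z} : Finset R)) ∪ {x * z₀, z * z₀, z * x} :=
            Finset.mem_union_right _ (Finset.mem_insert_self _ _)
          have he'mem : z * z₀ ∈ (S \ ({x, z₀, z} : Finset R)) ∪ {x * z₀, z * z₀, z * x} :=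
            Finset.mem_union_right _ (by simp)
          have he''mem : z * x ∈ (S \ ({x, z₀, z} : Finset R)) ∪ {x * z₀, z * z₀, z * x} :=
            Finset.mem_union_right _ (by simp)
          apply main {x, z₀, z} {x * z₀, z * z₀, z * x} hKsub
            (by rw [hKcard]
                exact le_trans (Finset.card_insert_le _ _)
                  (by have := Finset.card_insert_le (z * z₀) ({z * x} : Finset R); rw [Finset.card_singleton] at this; omega))
          · intro t ht
            simp only [Finset.coe_insert, Finset.coe_singleton, Set.mem_insert_iff,
              Set.mem_singleton_iff] at ht
            rcases ht with h | h | h <;> rw [h]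
            · exact hdV
            · exact ⟨hzz0, x, hx0, by linear_combination hzd⟩
            · exact ⟨hzx0, z₀, hz₀0, by linear_combination hzd⟩
          · intro v hv
            simp only [Finset.mem_insert, Finset.mem_singleton] at hv
            rcases hv with h | h | h <;> rw [h]
            · exact ⟨z * z₀, he'mem, by linear_combination hzd⟩
            · exact ⟨z * x, he''mem, by linear_combination hzd⟩
            · exact ⟨x * z₀, hdmem, by linear_combination hzd⟩
          · intro w hw v hwv
            simp only [Finset.mem_insert, Finset.mem_singleton] at hw
            rcases hw with h | h | h <;> rw [h] at hwv
            · exact ⟨x * z₀, hdmem, by linear_combination z₀ * hwv⟩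
            · exact ⟨x * z₀, hdmem, by linear_combination x * hwv⟩
            · exact ⟨z * z₀, he'mem, by linear_combination z₀ * hwv⟩
          · intro f hf
            simp only [Finset.mem_insert, Finset.mem_singleton] at hf
            rcases hf with h | h | h <;> rw [h]
            · exact ⟨z * z₀, he'mem, by linear_combination z₀ * hzd⟩
            · exact ⟨x * z₀, hdmem, by linear_combination z₀ * hzd⟩
            · exact ⟨x * z₀, hdmem, by linear_combination x * hzd⟩
          · exact Or.inl (Finset.mem_insert_self x _)

/-- If a dominating set has no lonely vertex, it is a total dominating set. -/
lemma total_of_no_lonely (S : Finset R) (hdom : IsDomSet R ↑S)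
    (h : ∀ s ∈ S, ∃ u ∈ S, u * s = 0) : IsTotDomSet R ↑S := by
  refine ⟨hdom.1, ?_⟩
  intro v hv
  by_cases hvS : v ∈ S
  · obtain ⟨u, hu, h0⟩ := h v hvS
    exact ⟨u, Finset.mem_coe.2 hu, h0⟩
  · exact hdom.2 v hv (fun hc => hvS (Finset.mem_coe.1 hc))

/-- Iterating the improvement step: every finite dominating set yields a total dominating
set of no larger size (given the singleton case is impossible). -/
lemma fix (hone : ∀ x : R, IsDomSet R ({x} : Set R) → x * x ≠ 0 → False) :
    ∀ (n : ℕ) (S : Finset R), IsDomSet R ↑S →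
      (S.filter fun s => ∀ u ∈ S, u * s ≠ 0).card ≤ n →
      ∃ T : Finset R, IsTotDomSet R ↑T ∧ T.card ≤ S.card := by
  intro n
  induction n with
  | zero =>
    intro S hdom hc
    refine ⟨S, total_of_no_lonely S hdom ?_, le_rfl⟩
    intro s hs
    by_contra hcon
    push_neg at hcon
    have : s ∈ S.filter fun s => ∀ u ∈ S, u * s ≠ 0 := Finset.mem_filter.2 ⟨hs, hcon⟩
    have hcard := Finset.card_eq_zero.1 (Nat.le_zero.1 hc)
    rw [hcard] at this
    exact absurd this (Finset.notMem_empty s)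
  | succ n ih =>
    intro S hdom hc
    by_cases hl : ∃ x ∈ S, ∀ u ∈ S, u * x ≠ 0
    · obtain ⟨x, hx, hlx⟩ := hl
      by_cases h2 : ∃ z₀ ∈ S, z₀ ≠ x
      · obtain ⟨z₀, hz₀, hne⟩ := h2
        obtain ⟨T', hT'dom, hT'card, hT'lt⟩ := step S hdom hx hlx hz₀ hne
        obtain ⟨T, hTtot, hTcard⟩ := ih T' hT'dom (by omega)
        exact ⟨T, hTtot, le_trans hTcard hT'card⟩
      · push_neg at h2
        have hSx : (↑S : Set R) = ({x} : Set R) := by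
          ext t
          simp only [Finset.mem_coe, Set.mem_singleton_iff]
          exact ⟨fun ht => h2 t ht, fun ht => ht ▸ hx⟩
        exact absurd (hSx ▸ hdom) (fun hd => hone x hd (hlx x hx))
    · push_neg at hl
      exact ⟨S, total_of_no_lonely S hdom hl, le_rfl⟩

/-- The `γ(Γ(R)) = 1` lonely case forces `R ≅ ℤ/2 × D` for a domain `D`. -/
lemma singleton_case
    (hni : ∀ (D : Type u) [CommRing D] [IsDomain D], ¬ Nonempty (R ≃+* ZMod 2 × D))
    (x : R) (hdom : IsDomSet R ({x} : Set R)) (hxx : x * x ≠ 0) : False := by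
  have hxV : x ∈ zdVerts R := hdom.1 rfl
  obtain ⟨hx0, y, hy0, hxy⟩ := hxV
  have dom' : ∀ v : R, v ∈ zdVerts R → v ≠ x → x * v = 0 := by
    intro v hv hvx
    obtain ⟨t, ht, h0⟩ := hdom.2 v hv (by simpa using hvx)
    rw [Set.mem_singleton_iff] at ht
    subst ht; exact h0
  have hidem : x * x = x := by
    by_contra hne
    have hsqV : x * x ∈ zdVerts R := ⟨hxx, y, hy0, by linear_combination x * hxy⟩
    have h3 : x * (x * x) = 0 := dom' _ hsqV hne
    have hw0 : x + x * x ≠ 0 := fun h => hxx (by linear_combination x * h - h3)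
    have hwV : x + x * x ∈ zdVerts R :=
      ⟨hw0, x * x, hxx, by linear_combination (1 + x) * h3⟩
    have hwx : x + x * x ≠ x := fun h => hxx (by linear_combination h)
    have h4 := dom' _ hwV hwx
    exact hxx (by linear_combination h4 - h3)
  have key : ∀ r : R, r * x = 0 ∨ r * x = x := by
    intro r
    by_contra hcon
    push_neg at hcon
    obtain ⟨h1, h2⟩ := hcon
    have hV : r * x ∈ zdVerts R := ⟨h1, y, hy0, by linear_combination r * hxy⟩
    have h3 := dom' _ hV h2
    exact h1 (by linear_combination h3 - r * hidem)
  have h2x : x + x = 0 := by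
    rcases key (1 + 1) with h | h
    · linear_combination h
    · exact absurd (by linear_combination h : x = 0) hx0
  have hx1 : x ≠ 1 := by
    intro h
    rw [h, one_mul] at hxy
    exact hy0 hxy
  have hspan : ∀ r : R, r ∈ Ideal.span ({x} : Set R) ↔ r * x = r := by
    intro r
    constructor
    · intro hr
      obtain ⟨c, hc⟩ := Ideal.mem_span_singleton'.1 hr
      linear_combination c * hidem - (x - 1) * hc
    · intro hr
      exact Ideal.mem_span_singleton.2 ⟨r, by linear_combination -hr⟩
  have hne_top : Ideal.span ({x} : Set R) ≠ ⊤ := by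
    intro h
    have h1 : (1 : R) ∈ Ideal.span ({x} : Set R) := h ▸ Submodule.mem_top
    have h2 := (hspan 1).1 h1
    exact hx1 (by linear_combination h2)
  haveI : Nontrivial (R ⧸ Ideal.span ({x} : Set R)) := Ideal.Quotient.nontrivial_iff.mpr hne_top
  haveI : NoZeroDivisors (R ⧸ Ideal.span ({x} : Set R)) := by
    refine ⟨fun {a b} hab => ?_⟩
    obtain ⟨r, rfl⟩ := Ideal.Quotient.mk_surjective a
    obtain ⟨s, rfl⟩ := Ideal.Quotient.mk_surjective b
    rw [← map_mul] at hab
    have hmem : r * s ∈ Ideal.span ({x} : Set R) := Ideal.Quotient.eq_zero_iff_mem.1 hab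
    have hrs : (r * s) * x = r * s := (hspan _).1 hmem
    have hkey : (r - r * x) * (s - s * x) = 0 := by linear_combination r * s * hidem - hrs
    have hor : r - r * x = 0 ∨ s - s * x = 0 := by
      by_contra hcon
      push_neg at hcon
      obtain ⟨hr0, hs0⟩ := hcon
      have hvV : x + (r - r * x) ∈ zdVerts R := by
        refine ⟨fun h => hx0 ?_, s - s * x, hs0, ?_⟩
        · linear_combination x * h + (r - 1) * hidem
        · linear_combination hkey - s * hidem
      have hvx : x + (r - r * x) ≠ x := fun h => hr0 (by linear_combination h)
      have h4 := dom' _ hvV hvx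
      exact hx0 (by linear_combination h4 + (r - 1) * hidem)
    rcases hor with h | h
    · exact Or.inl (Ideal.Quotient.eq_zero_iff_mem.2 ((hspan r).2 (by linear_combination -h)))
    · exact Or.inr (Ideal.Quotient.eq_zero_iff_mem.2 ((hspan s).2 (by linear_combination -h)))
  haveI : IsDomain (R ⧸ Ideal.span ({x} : Set R)) := NoZeroDivisors.to_isDomain _
  -- the ring hom to ZMod 2
  let f : R → ZMod 2 := fun r => if r * x = 0 then 0 else 1
  have fval0 : ∀ r : R, r * x = 0 → f r = 0 := by
    intro r h
    simp only [f]
    rw [if_pos h]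
  have fval1 : ∀ r : R, r * x ≠ 0 → f r = 1 := by
    intro r h
    simp only [f]
    rw [if_neg h]
  let ψ : R →+* ZMod 2 :=
    { toFun := f
      map_one' := fval1 1 (by rw [one_mul]; exact hx0)
      map_mul' := by
        intro r s
        show f (r * s) = f r * f s
        rcases key r with hr | hr
        · have h1 : r * s * x = 0 := by linear_combination s * hr
          rw [fval0 _ h1, fval0 _ hr, zero_mul]
        · have hr' : r * x ≠ 0 := by rw [hr]; exact hx0
          rcases key s with hs | hs
          · have h1 : r * s * x = 0 := by linear_combination r * hs
            rw [fval0 _ h1, fval0 _ hs, mul_zero]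
          · have hs' : s * x ≠ 0 := by rw [hs]; exact hx0
            have h1 : r * s * x = x := by linear_combination r * hs + hr
            have h1' : r * s * x ≠ 0 := by rw [h1]; exact hx0
            rw [fval1 _ h1', fval1 _ hr', fval1 _ hs', mul_one]
      map_zero' := fval0 0 (zero_mul x)
      map_add' := by
        intro r s
        show f (r + s) = f r + f s
        rcases key r with hr | hr <;> rcases key s with hs | hs
        · have h1 : (r + s) * x = 0 := by linear_combination hr + hs
          rw [fval0 _ h1, fval0 _ hr, fval0 _ hs, add_zero]
        · have hs' : s * x ≠ 0 := by rw [hs]; exact hx0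
          have h1 : (r + s) * x = x := by linear_combination hr + hs
          have h1' : (r + s) * x ≠ 0 := by rw [h1]; exact hx0
          rw [fval1 _ h1', fval0 _ hr, fval1 _ hs', zero_add]
        · have hr' : r * x ≠ 0 := by rw [hr]; exact hx0
          have h1 : (r + s) * x = x := by linear_combination hr + hs
          have h1' : (r + s) * x ≠ 0 := by rw [h1]; exact hx0
          rw [fval1 _ h1', fval1 _ hr', fval0 _ hs, add_zero]
        · have hr' : r * x ≠ 0 := by rw [hr]; exact hx0
          have hs' : s * x ≠ 0 := by rw [hs]; exact hx0
          have h1 : (r + s) * x = 0 := by linear_combination hr + hs + h2x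
          rw [fval0 _ h1, fval1 _ hr', fval1 _ hs']
          decide }
  have ψval0 : ∀ r : R, r * x = 0 → ψ r = 0 := fval0
  have ψval1 : ∀ r : R, r * x ≠ 0 → ψ r = 1 := fval1
  let φ : R →+* ZMod 2 × (R ⧸ Ideal.span ({x} : Set R)) :=
    ψ.prod (Ideal.Quotient.mk (Ideal.span ({x} : Set R)))
  have φ_eq : ∀ r : R, φ r = (ψ r, Ideal.Quotient.mk (Ideal.span ({x} : Set R)) r) :=
    fun _ => rfl
  have hinj : Function.Injective φ := by
    intro r s h
    rw [φ_eq, φ_eq, Prod.mk.injEq] at h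
    obtain ⟨h1, h2⟩ := h
    have h3 : (r - s) * x = r - s := (hspan _).1 (Ideal.Quotient.eq.1 h2)
    rcases key r with hr | hr <;> rcases key s with hs | hs
    · exact sub_eq_zero.1 (by linear_combination -h3 + hr - hs)
    · exfalso
      rw [ψval0 _ hr, ψval1 _ (by rw [hs]; exact hx0)] at h1
      exact absurd h1 (by decide)
    · exfalso
      rw [ψval1 _ (by rw [hr]; exact hx0), ψval0 _ hs] at h1
      exact absurd h1 (by decide)
    · exact sub_eq_zero.1 (by linear_combination -h3 + hr - hs)
  have hsurj : Function.Surjective φ := by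
    rintro ⟨z, q⟩
    obtain ⟨r, rfl⟩ := Ideal.Quotient.mk_surjective q
    have hrx : (r - r * x) * x = 0 := by linear_combination -r * hidem
    have hmkfix : Ideal.Quotient.mk (Ideal.span ({x} : Set R)) (r - r * x) =
        Ideal.Quotient.mk (Ideal.span ({x} : Set R)) r := by
      rw [Ideal.Quotient.eq]
      exact (hspan _).2 (by linear_combination -r * hidem)
    have hz : z = 0 ∨ z = 1 := by
      have : ∀ w : ZMod 2, w = 0 ∨ w = 1 := by decide
      exact this z
    rcases hz with rfl | rfl
    · refine ⟨r - r * x, ?_⟩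
      rw [φ_eq, ψval0 _ hrx, hmkfix]
    · refine ⟨x + (r - r * x), ?_⟩
      have hval : (x + (r - r * x)) * x = x := by linear_combination (1 - r) * hidem
      have hval' : (x + (r - r * x)) * x ≠ 0 := by rw [hval]; exact hx0
      have hmk2 : Ideal.Quotient.mk (Ideal.span ({x} : Set R)) (x + (r - r * x)) =
          Ideal.Quotient.mk (Ideal.span ({x} : Set R)) r := by
        rw [Ideal.Quotient.eq]
        exact (hspan _).2 (by linear_combination (1 - r) * hidem)
      rw [φ_eq, ψval1 _ hval', hmk2]
  exact hni (R ⧸ Ideal.span ({x} : Set R)) ⟨RingEquiv.ofBijective φ ⟨hinj, hsurj⟩⟩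

/-- The infinite case: pad an infinite dominating set to a total dominating set of
the same cardinality. -/
lemma infinite_case (S : Set R) (hdom : IsDomSet R S)
    (hinf : Cardinal.aleph0 ≤ Cardinal.mk S) :
    ∃ T : Set R, IsTotDomSet R T ∧ Cardinal.mk T ≤ Cardinal.mk S := by
  let g : R → R := fun s => if h : s ∈ zdVerts R then Classical.choose h.2 else 0
  have hg : ∀ s ∈ zdVerts R, g s ≠ 0 ∧ s * g s = 0 := by
    intro s hs
    simp only [g, dif_pos hs]
    exact ⟨(Classical.choose_spec hs.2).1, (Classical.choose_spec hs.2).2⟩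
  refine ⟨S ∪ g '' S, ⟨?_, ?_⟩, ?_⟩
  · rintro t (ht | ⟨s, hs, rfl⟩)
    · exact hdom.1 ht
    · have hsV := hdom.1 hs
      obtain ⟨hg0, hsg⟩ := hg s hsV
      exact ⟨hg0, s, hsV.1, by rw [mul_comm]; exact hsg⟩
  · intro v hv
    by_cases hvS : v ∈ S
    · obtain ⟨hg0, hvg⟩ := hg v hv
      exact ⟨g v, Or.inr ⟨v, hvS, rfl⟩, by rw [mul_comm]; exact hvg⟩
    · obtain ⟨t, ht, h0⟩ := hdom.2 v hv hvS
      exact ⟨t, Or.inl ht, h0⟩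
  · calc Cardinal.mk ↥(S ∪ g '' S) ≤ Cardinal.mk S + Cardinal.mk ↥(g '' S) :=
        Cardinal.mk_union_le _ _
      _ ≤ Cardinal.mk S + Cardinal.mk S := add_le_add_right (Cardinal.mk_image_le) _
      _ = Cardinal.mk S := Cardinal.add_eq_self hinf

end Stmt18Aux

theorem stmt_18 (R : Type u) [CommRing R]
    (hni : ∀ (D : Type u) [CommRing D] [IsDomain D], ¬ Nonempty (R ≃+* ZMod 2 × D)) :
    totDomNum R = domNum R := by
  classical
  haveI hnet : Nonempty {X : Set R // IsTotDomSet R X} := ⟨⟨zdVerts R, zdVerts_tot⟩⟩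
  haveI hned : Nonempty {X : Set R // IsDomSet R X} :=
    ⟨⟨zdVerts R, dom_of_tot zdVerts_tot⟩⟩
  apply le_antisymm
  · -- totDomNum ≤ domNum
    obtain ⟨⟨S, hS⟩, hSmin⟩ :
        ∃ X : {X : Set R // IsDomSet R X}, Cardinal.mk X.1 = domNum R := by
      have h1 : domNum R ∈
          Set.range (fun X : {X : Set R // IsDomSet R X} => Cardinal.mk X.1) := by
        have : domNum R =
            sInf (Set.range (fun X : {X : Set R // IsDomSet R X} => Cardinal.mk X.1)) := rfl
        rw [this]
        exact csInf_mem (Set.range_nonempty _)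
      obtain ⟨X, hX⟩ := h1
      exact ⟨X, hX⟩
    rcases lt_or_ge (Cardinal.mk S) Cardinal.aleph0 with hfin | hinf
    · have hSfin : S.Finite := Cardinal.lt_aleph0_iff_set_finite.1 hfin
      have hdomF : IsDomSet R ↑hSfin.toFinset := by rwa [Set.Finite.coe_toFinset]
      have hone : ∀ x : R, IsDomSet R ({x} : Set R) → x * x ≠ 0 → False :=
        fun x hd hxx => singleton_case hni x hd hxx
      obtain ⟨T, hTtot, hTcard⟩ := fix hone _ hSfin.toFinset hdomF le_rfl
      have h1 : totDomNum R ≤ Cardinal.mk (↑(↑T : Set R)) :=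
        ciInf_le' (fun X : {X : Set R // IsTotDomSet R X} => Cardinal.mk X.1) ⟨↑T, hTtot⟩
      have h2 : Cardinal.mk (↑(↑T : Set R)) = (T.card : Cardinal) := Cardinal.mk_coe_finset
      have h3 : (T.card : Cardinal) ≤ (hSfin.toFinset.card : Cardinal) :=
        Nat.cast_le.2 hTcard
      have h4 : ((hSfin.toFinset.card : ℕ) : Cardinal) = Cardinal.mk S := by
        have hcoe : (hSfin.toFinset : Set R) = S := Set.Finite.coe_toFinset _
        calc ((hSfin.toFinset.card : ℕ) : Cardinal)
            = Cardinal.mk (↑(hSfin.toFinset : Set R)) := Cardinal.mk_coe_finset.symm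
          _ = Cardinal.mk S := Cardinal.mk_congr (Equiv.setCongr hcoe)
      calc totDomNum R ≤ _ := h1
        _ = _ := h2
        _ ≤ _ := h3
        _ = Cardinal.mk S := h4
        _ = domNum R := hSmin
    · obtain ⟨T, hTtot, hTcard⟩ := infinite_case S hS hinf
      have h1 : totDomNum R ≤ Cardinal.mk T :=
        ciInf_le' (fun X : {X : Set R // IsTotDomSet R X} => Cardinal.mk X.1) ⟨T, hTtot⟩
      exact h1.trans (hTcard.trans_eq hSmin)
  · -- domNum ≤ totDomNum
    refine le_ciInf fun X => ?_
    exact ciInf_le' (fun X : {X : Set R // IsDomSet R X} => Cardinal.mk X.1)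
      ⟨X.1, dom_of_tot X.2⟩
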